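/- Let K : ℝ^d × ℝ^d → ℂ be continuous and ψ ∈ L²(ℝ^d), and suppose that for every x ∈ ℝ^d there exists a compact Lebesgue-measurable set A ⊆ ℝ^d with ψ_A(x) ≠ 0. Then the ℂ-linear span of the set { χ_B · ψ_A : A ⊆ ℝ^d compact Lebesgue-measurable, B ⊆ ℝ^d bounded Lebesgue-measurable } is dense in L²(ℝ^d). (This is the onto-ness of the natural map f from the History Hilbert space H₂ to L²(ℝ^d), which together with its injectivity and inner-product preservation shows that the History Hilbert space is isomorphic to the standard Hilbert space L²(ℝ^d).) -/

import Mathlib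

open MeasureTheory

/-- The set of `L²` classes of the functions `χ_B · ψ_A` (`A` compact
measurable, `B` bounded measurable), where `ψ_A x = ∫_A K (x, y) ψ y dy`. -/
def restrictedEvolutionSet (d : ℕ)
    (K : EuclideanSpace ℝ (Fin d) × EuclideanSpace ℝ (Fin d) → ℂ)
    (ψ : EuclideanSpace ℝ (Fin d) → ℂ) :
    Set (Lp ℂ 2 (volume : Measure (EuclideanSpace ℝ (Fin d)))) :=
  {f | ∃ A B : Set (EuclideanSpace ℝ (Fin d)),
    IsCompact A ∧ MeasurableSet A ∧ Bornology.IsBounded B ∧ MeasurableSet B ∧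
    (f : EuclideanSpace ℝ (Fin d) → ℂ) =ᵐ[volume]
      fun x => Set.indicator B (fun _ => (1 : ℂ)) x * ∫ y in A, K (x, y) * ψ y}

section Aux

variable {d : ℕ}

private lemma finite_restrict {s : Set (EuclideanSpace ℝ (Fin d))}
    (hs : volume s < ⊤) :
    IsFiniteMeasure ((volume : Measure (EuclideanSpace ℝ (Fin d))).restrict s) :=
  ⟨by rwa [Measure.restrict_apply_univ]⟩

/-- Continuity of the restricted evolution `ψ_A`. -/
private lemma psiA_continuous
    (K : EuclideanSpace ℝ (Fin d) × EuclideanSpace ℝ (Fin d) → ℂ) (hK : Continuous K)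
    (ψ : EuclideanSpace ℝ (Fin d) → ℂ) (hψ : MemLp ψ 2 volume)
    {A : Set (EuclideanSpace ℝ (Fin d))} (hA : IsCompact A) (hAm : MeasurableSet A) :
    Continuous fun x => ∫ y in A, K (x, y) * ψ y := by
  have hfin : IsFiniteMeasure (volume.restrict A) := finite_restrict hA.measure_lt_top
  have hψint : Integrable ψ (volume.restrict A) :=
    MemLp.integrable (by norm_num) (hψ.restrict A)
  rw [continuous_iff_continuousAt]
  intro x₀
  obtain ⟨C, hC⟩ :=
    ((isCompact_closedBall x₀ 1).prod hA).exists_bound_of_continuousOn hK.continuousOn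
  refine continuousAt_of_dominated (bound := fun y => C * ‖ψ y‖) ?_ ?_ ?_ ?_
  · refine Filter.Eventually.of_forall fun x => ?_
    exact ((hK.comp (continuous_const.prodMk continuous_id)).aestronglyMeasurable).mul
      (hψ.aestronglyMeasurable.restrict)
  · refine Filter.eventually_of_mem (Metric.closedBall_mem_nhds x₀ one_pos) fun x hx => ?_
    refine (ae_restrict_iff' hAm).2 (Filter.Eventually.of_forall fun y hy => ?_)
    rw [norm_mul]
    exact mul_le_mul_of_nonneg_right (hC (x, y) ⟨hx, hy⟩) (norm_nonneg _)
  · exact hψint.norm.const_mul C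
  · exact Filter.Eventually.of_forall fun y =>
      ((hK.comp (continuous_id.prodMk continuous_const)).mul continuous_const).continuousAt

/-- `χ_B · f` is in `L²` for `f` continuous and `B` bounded measurable. -/
private lemma memLp_chi {B : Set (EuclideanSpace ℝ (Fin d))}
    (hB : Bornology.IsBounded B) (hBm : MeasurableSet B)
    {f : EuclideanSpace ℝ (Fin d) → ℂ} (hf : Continuous f) :
    MemLp (fun x => Set.indicator B (fun _ => (1 : ℂ)) x * f x) 2 volume := by
  have heq : (fun x => Set.indicator B (fun _ => (1 : ℂ)) x * f x) = Set.indicator B f := by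
    ext x
    by_cases hx : x ∈ B <;> simp [hx]
  rw [heq, memLp_indicator_iff_restrict hBm]
  have hcc : IsCompact (closure B) := hB.isCompact_closure
  have hfin : IsFiniteMeasure (volume.restrict B) :=
    finite_restrict (lt_of_le_of_lt (measure_mono subset_closure) hcc.measure_lt_top)
  obtain ⟨C, hC⟩ := hcc.exists_bound_of_continuousOn hf.continuousOn
  have htop : MemLp f ⊤ (volume.restrict B) := by
    refine memLp_top_of_bound hf.aestronglyMeasurable.restrict C ?_
    exact (ae_restrict_iff' hBm).2 (Filter.Eventually.of_forall fun y hy =>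
      hC y (subset_closure hy))
  exact htop.mono_exponent le_top

end Aux

/-- Onto-ness of the natural map from the History Hilbert space to `L²(ℝ^d)`:
if every point of `ℝ^d` is reachable (some compact measurable set has nonzero
restricted evolution there), the `ℂ`-span of the vectors `χ_B · ψ_A` is dense
in `L²(ℝ^d)`. -/
theorem stmt_12 (d : ℕ) (hd : 1 ≤ d)
    (K : EuclideanSpace ℝ (Fin d) × EuclideanSpace ℝ (Fin d) → ℂ)
    (hK : Continuous K)
    (ψ : EuclideanSpace ℝ (Fin d) → ℂ) (hψ : MemLp ψ 2 volume)
    (hreach : ∀ x : EuclideanSpace ℝ (Fin d),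
      ∃ A : Set (EuclideanSpace ℝ (Fin d)), IsCompact A ∧ MeasurableSet A ∧
        ∫ y in A, K (x, y) * ψ y ≠ 0) :
    Dense (Submodule.span ℂ (restrictedEvolutionSet d K ψ) :
      Set (Lp ℂ 2 (volume : Measure (EuclideanSpace ℝ (Fin d))))) := by
  classical
  rw [Submodule.dense_iff_topologicalClosure_eq_top,
    Submodule.topologicalClosure_eq_top_iff, Submodule.eq_bot_iff]
  intro g hg
  set ψA : Set (EuclideanSpace ℝ (Fin d)) → (EuclideanSpace ℝ (Fin d)) → ℂ := fun A x => ∫ y in A, K (x, y) * ψ y with hψA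
  -- Step 1: orthogonality against each generator gives vanishing set integrals.
  have key : ∀ (A : Set (EuclideanSpace ℝ (Fin d))), IsCompact A → MeasurableSet A →
      ∀ (B : Set (EuclideanSpace ℝ (Fin d))), Bornology.IsBounded B → MeasurableSet B →
      ∫ x in B, (starRingEnd ℂ) (ψA A x) * (g : (EuclideanSpace ℝ (Fin d)) → ℂ) x ∂(volume : Measure (EuclideanSpace ℝ (Fin d))) = 0 := by
    intro A hAc hAm B hBb hBm
    have hcont : Continuous (ψA A) := psiA_continuous K hK ψ hψ hAc hAm
    have hmem : MemLp (fun x => Set.indicator B (fun _ => (1 : ℂ)) x * ψA A x) 2 (volume : Measure (EuclideanSpace ℝ (Fin d))) :=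
      memLp_chi hBb hBm hcont
    have hvS : hmem.toLp _ ∈ restrictedEvolutionSet d K ψ :=
      ⟨A, B, hAc, hAm, hBb, hBm, hmem.coeFn_toLp⟩
    have h0 : inner (𝕜 := ℂ) (hmem.toLp _) g = 0 :=
      (Submodule.mem_orthogonal _ g).1 hg _ (Submodule.subset_span hvS)
    rw [MeasureTheory.L2.inner_def] at h0
    have h1 : ∫ x, inner (𝕜 := ℂ) ((hmem.toLp _ : Lp ℂ 2 (volume : Measure (EuclideanSpace ℝ (Fin d)))) x) ((g : (EuclideanSpace ℝ (Fin d)) → ℂ) x) ∂(volume : Measure (EuclideanSpace ℝ (Fin d)))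
        = ∫ x, Set.indicator B
            (fun x => (starRingEnd ℂ) (ψA A x) * (g : (EuclideanSpace ℝ (Fin d)) → ℂ) x) x ∂(volume : Measure (EuclideanSpace ℝ (Fin d))) := by
      refine integral_congr_ae ?_
      filter_upwards [hmem.coeFn_toLp] with x hx
      rw [RCLike.inner_apply, hx]
      by_cases hxB : x ∈ B <;> simp [hxB] <;> ring
    rw [h1, integral_indicator hBm] at h0
    exact h0
  -- Step 2: for each compact measurable A, conj (ψA A) * g = 0 a.e.
  have step2 : ∀ (A : Set (EuclideanSpace ℝ (Fin d))), IsCompact A → MeasurableSet A →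
      ∀ᵐ x ∂(volume : Measure (EuclideanSpace ℝ (Fin d))), (starRingEnd ℂ) (ψA A x) * (g : (EuclideanSpace ℝ (Fin d)) → ℂ) x = 0 := by
    intro A hAc hAm
    have hcont : Continuous (ψA A) := psiA_continuous K hK ψ hψ hAc hAm
    set h : (EuclideanSpace ℝ (Fin d)) → ℂ := fun x => (starRingEnd ℂ) (ψA A x) * (g : (EuclideanSpace ℝ (Fin d)) → ℂ) x with hh
    have hball : ∀ n : ℕ, ∀ᵐ x ∂((volume : Measure (EuclideanSpace ℝ (Fin d))).restrict (Metric.closedBall (0 : (EuclideanSpace ℝ (Fin d))) n)), h x = 0 := by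
      intro n
      set Bn := Metric.closedBall (0 : (EuclideanSpace ℝ (Fin d))) (n : ℝ) with hBn
      have hBnm : MeasurableSet Bn := measurableSet_closedBall
      haveI hfin : IsFiniteMeasure ((volume : Measure (EuclideanSpace ℝ (Fin d))).restrict Bn) :=
        finite_restrict (isCompact_closedBall _ _).measure_lt_top
      have hgint : Integrable (g : (EuclideanSpace ℝ (Fin d)) → ℂ) ((volume : Measure (EuclideanSpace ℝ (Fin d))).restrict Bn) :=
        MemLp.integrable (by norm_num) ((Lp.memLp g).restrict Bn)
      obtain ⟨C, hC⟩ := (isCompact_closedBall (0 : (EuclideanSpace ℝ (Fin d))) (n : ℝ)).exists_bound_of_continuousOn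
        ((RCLike.continuous_conj.comp hcont)).continuousOn
      have hint : Integrable h ((volume : Measure (EuclideanSpace ℝ (Fin d))).restrict Bn) := by
        refine hgint.bdd_mul (c := C)
          ((RCLike.continuous_conj.comp hcont)).aestronglyMeasurable.restrict ?_
        exact (ae_restrict_iff' hBnm).2 (Filter.Eventually.of_forall fun y hy => hC y hy)
      have hzero : ∀ s, MeasurableSet s → ((volume : Measure (EuclideanSpace ℝ (Fin d))).restrict Bn) s < ⊤ →
          ∫ x in s, h x ∂((volume : Measure (EuclideanSpace ℝ (Fin d))).restrict Bn) = 0 := by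
        intro s hs _
        rw [Measure.restrict_restrict hs]
        exact key A hAc hAm (s ∩ Bn)
          (Metric.isBounded_closedBall.subset Set.inter_subset_right) (hs.inter hBnm)
      exact hint.ae_eq_zero_of_forall_setIntegral_eq_zero hzero
    have hN : (volume : Measure (EuclideanSpace ℝ (Fin d))) {x | ¬ h x = 0} = 0 := by
      have hcover : {x | ¬ h x = 0}
          = ⋃ n : ℕ, {x | ¬ h x = 0} ∩ Metric.closedBall (0 : (EuclideanSpace ℝ (Fin d))) n := by
        rw [← Set.inter_iUnion, Metric.iUnion_closedBall_nat, Set.inter_univ]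
      rw [hcover]
      refine measure_iUnion_null fun n => ?_
      have hth := hball n
      rw [ae_iff, Measure.restrict_apply' measurableSet_closedBall] at hth
      exact hth
    rwa [ae_iff]
  -- Step 3: countable cover by openness and reachability.
  have hg0 : (g : (EuclideanSpace ℝ (Fin d)) → ℂ) =ᵐ[(volume : Measure (EuclideanSpace ℝ (Fin d)))] 0 := by
    set ι := {p : Set (EuclideanSpace ℝ (Fin d)) // IsCompact p ∧ MeasurableSet p} with hι
    set U : ι → Set (EuclideanSpace ℝ (Fin d)) := fun A => {x | ψA A.1 x ≠ 0} with hU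
    have hUopen : ∀ A : ι, IsOpen (U A) :=
      fun A => isOpen_compl_singleton.preimage (psiA_continuous K hK ψ hψ A.2.1 A.2.2)
    have hUcover : (⋃ A : ι, U A) = Set.univ := by
      refine Set.eq_univ_of_forall fun x => ?_
      obtain ⟨A, hc, hm, hne⟩ := hreach x
      exact Set.mem_iUnion.2 ⟨⟨A, hc, hm⟩, hne⟩
    obtain ⟨T, hTc, hTU⟩ := TopologicalSpace.isOpen_iUnion_countable U hUopen
    have hae : ∀ᵐ x ∂(volume : Measure (EuclideanSpace ℝ (Fin d))), ∀ A ∈ T, (starRingEnd ℂ) (ψA A.1 x) * (g : (EuclideanSpace ℝ (Fin d)) → ℂ) x = 0 :=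
      (ae_ball_iff hTc).2 fun A _ => step2 A.1 A.2.1 A.2.2
    filter_upwards [hae] with x hx
    have hxU : x ∈ ⋃ A ∈ T, U A := by rw [hTU, hUcover]; trivial
    obtain ⟨A, hAT, hxA⟩ := Set.mem_iUnion₂.1 hxU
    have hmul := hx A hAT
    have hne : (starRingEnd ℂ) (ψA A.1 x) ≠ 0 := by
      simpa [hU] using hxA
    exact (mul_eq_zero.1 hmul).resolve_left hne
  exact Lp.ext (hg0.trans (Lp.coeFn_zero ℂ 2 (volume : Measure (EuclideanSpace ℝ (Fin d)))).symm)
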